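/- Let A be a finite set. The poset 𝒢ₙ(A) of acyclic directed complete graphs on A with edge-weights in {1,…,n}, ordered by: g ≤ h iff for every edge a →ᵛ b in g, either a →ʷ b in h with v ≤ w, or b →ʷ a in h with v < w strictly, is a partial order (reflexive, antisymmetric, transitive). -/
import Mathlib


/-- A directed weighted complete graph on a vertex set `A`, with weights in `{1,…,n}`:
for each pair of distinct vertices there is exactly one direction, and a weight in `{1,…,n}`
(weights are recorded symmetrically, and are `0` on the diagonal for normalisation). -/
structure CGraph (A : Type) (n : ℕ) where
  dir : A → A → Prop
  wt : A → A → ℕ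
  dir_irrefl : ∀ a, ¬ dir a a
  dir_total : ∀ a b, a ≠ b → (dir a b ↔ ¬ dir b a)
  wt_symm : ∀ a b, wt a b = wt b a
  wt_irrefl : ∀ a, wt a a = 0
  wt_pos : ∀ a b, a ≠ b → 1 ≤ wt a b
  wt_le_n : ∀ a b, a ≠ b → wt a b ≤ n

/-- The order on weighted complete graphs: `g ≤ h` iff for every edge `a →ᵛ b` of `g`,
either `a →ʷ b` in `h` with `v ≤ w`, or `b →ʷ a` in `h` with `v < w` strictly. -/
def CGraph.le {A : Type} {n : ℕ} (g h : CGraph A n) : Prop :=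
  ∀ a b, a ≠ b → g.dir a b →
    (h.dir a b ∧ g.wt a b ≤ h.wt a b) ∨ (h.dir b a ∧ g.wt a b < h.wt b a)

/-- A complete directed graph is acyclic iff its direction relation is transitive,
i.e. the directions define a linear order on the vertices. -/
def CGraph.Acyclic {A : Type} {n : ℕ} (g : CGraph A n) : Prop :=
  ∀ a b c, g.dir a b → g.dir b c → g.dir a c

lemma CGraph.antisymm_aux {A : Type} {n : ℕ} {g h : CGraph A n}
    (hgh : g.le h) (hhg : h.le g) {a b : A} (hab : a ≠ b) (hd : g.dir a b) :
    h.dir a b ∧ g.wt a b = h.wt a b := by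
  rcases hgh a b hab hd with ⟨hd', hle⟩ | ⟨hdba, hlt⟩
  · rcases hhg a b hab hd' with ⟨_, hle'⟩ | ⟨hgba, _⟩
    · exact ⟨hd', le_antisymm hle hle'⟩
    · exact absurd hgba ((g.dir_total a b hab).mp hd)
  · rcases hhg b a hab.symm hdba with ⟨hgba, _⟩ | ⟨_, hlt'⟩
    · exact absurd hgba ((g.dir_total a b hab).mp hd)
    · exact absurd (hlt.trans hlt') (lt_irrefl _)

theorem statement1 (A : Type) [Finite A] (n : ℕ) :
    (∀ g : {g : CGraph A n // g.Acyclic}, g.1.le g.1) ∧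
    (∀ g h : {g : CGraph A n // g.Acyclic}, g.1.le h.1 → h.1.le g.1 → g = h) ∧
    (∀ g h k : {g : CGraph A n // g.Acyclic}, g.1.le h.1 → h.1.le k.1 → g.1.le k.1) := by
  refine ⟨fun g a b hab hd => Or.inl ⟨hd, le_rfl⟩, ?_, ?_⟩
  · rintro ⟨g, hg⟩ ⟨h, hh⟩ hgh hhg
    have hdir : g.dir = h.dir := by
      funext a b
      apply propext
      by_cases hab : a = b
      · subst hab; exact ⟨fun hd => absurd hd (g.dir_irrefl a),
          fun hd => absurd hd (h.dir_irrefl a)⟩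
      · constructor
        · exact fun hd => (CGraph.antisymm_aux hgh hhg hab hd).1
        · exact fun hd => (CGraph.antisymm_aux hhg hgh hab hd).1
    have hwt : g.wt = h.wt := by
      funext a b
      by_cases hab : a = b
      · subst hab; rw [g.wt_irrefl, h.wt_irrefl]
      · by_cases hd : g.dir a b
        · exact (CGraph.antisymm_aux hgh hhg hab hd).2
        · have hd' : g.dir b a := by
            by_contra hnd
            exact hd ((g.dir_total a b hab).mpr hnd)
          rw [g.wt_symm, h.wt_symm]
          exact (CGraph.antisymm_aux hgh hhg (Ne.symm hab) hd').2
    cases g; cases h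
    simp only at hdir hwt
    subst hdir; subst hwt
    rfl
  · rintro ⟨g, _⟩ ⟨h, _⟩ ⟨k, _⟩ hgh hhk a b hab hd
    rcases hgh a b hab hd with ⟨hd', hle⟩ | ⟨hdba, hlt⟩
    · rcases hhk a b hab hd' with ⟨hk', hle'⟩ | ⟨hkba, hlt'⟩
      · exact Or.inl ⟨hk', hle.trans hle'⟩
      · exact Or.inr ⟨hkba, lt_of_le_of_lt hle hlt'⟩
    · rcases hhk b a hab.symm hdba with ⟨hkba, hle'⟩ | ⟨hkab, hlt'⟩
      · exact Or.inr ⟨hkba, lt_of_lt_of_le hlt hle'⟩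
      ·
        exact Or.inl ⟨hkab, (hlt.trans hlt').le⟩
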